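/- Let k >= 2 be an integer and n = k^2. Consider the fair-goods instance with n agents and n + 1 goods e_1, ..., e_{n+1} where: for each agent i with 1 <= i <= k, v_i(e_j) = 1/k if (i-1)k + 1 <= j <= ik and v_i(e_j) = 0 otherwise; and for each agent i with k+1 <= i <= n, v_i(e_j) = 1/(n+1) for all j. Then OPT_U >= k + 1/(n+1), while every connected PROP1 allocation A satisfies UW(A) <= 2 - (k-1)/(k(n+1)). Hence the price of PROP1 with respect to utilitarian welfare for goods is Omega(sqrt(n)). -/

import Mathlib

open Finset

noncomputable section

/-- The value of a bundle `S` of items under additive (item-level) valuation `v`. -/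
def bundleVal {m : ℕ} (v : Fin m → ℝ) (S : Finset (Fin m)) : ℝ := ∑ e ∈ S, v e

/-- A bundle is connected if it is an interval of the line `e_1, …, e_m`. -/
def IsConnBundle {m : ℕ} (S : Finset (Fin m)) : Prop :=
  ∀ a ∈ S, ∀ c ∈ S, ∀ b : Fin m, a ≤ b → b ≤ c → b ∈ S

/-- A connected allocation: pairwise disjoint connected bundles covering all items. -/
def ConnAlloc (n m : ℕ) (A : Fin n → Finset (Fin m)) : Prop :=
  (∀ i, IsConnBundle (A i)) ∧
  (∀ i j : Fin n, i ≠ j → Disjoint (A i) (A j)) ∧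
  (∀ e : Fin m, ∃ i, e ∈ A i)

/-- The maximin share of an agent with valuation `v`: the maximum over connected
`n`-partitions of the minimum bundle value. -/
def mmsVal (n m : ℕ) (v : Fin m → ℝ) : ℝ :=
  sSup { x : ℝ | ∃ A : Fin n → Finset (Fin m), ConnAlloc n m A ∧ x = ⨅ j, bundleVal v (A j) }

/-- Utilitarian welfare of an allocation. -/
def utilW (n m : ℕ) (v : Fin n → Fin m → ℝ) (A : Fin n → Finset (Fin m)) : ℝ :=
  ∑ i, bundleVal (v i) (A i)

/-- Egalitarian welfare of an allocation. -/
def egalW (n m : ℕ) (v : Fin n → Fin m → ℝ) (A : Fin n → Finset (Fin m)) : ℝ :=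
  ⨅ i, bundleVal (v i) (A i)

/-- Optimal utilitarian welfare over all connected allocations. -/
def optU (n m : ℕ) (v : Fin n → Fin m → ℝ) : ℝ :=
  sSup { x : ℝ | ∃ A, ConnAlloc n m A ∧ x = utilW n m v A }

/-- Optimal egalitarian welfare over all connected allocations. -/
def optE (n m : ℕ) (v : Fin n → Fin m → ℝ) : ℝ :=
  sSup { x : ℝ | ∃ A, ConnAlloc n m A ∧ x = egalW n m v A }

/-- A connected allocation of goods is PROP1 if every agent either already has value at
least `1/n`, or gets value at least `1/n` after adding one item keeping connectivity. -/
def Prop1Goods (n m : ℕ) (v : Fin n → Fin m → ℝ) (A : Fin n → Finset (Fin m)) : Prop :=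
  ∀ i, (1 / (n : ℝ)) ≤ bundleVal (v i) (A i) ∨
    ∃ e : Fin m, e ∉ A i ∧ IsConnBundle (insert e (A i)) ∧
      (1 / (n : ℝ)) ≤ bundleVal (v i) (insert e (A i))

/-- The hard instance for Goods | Utilitarian | PROP1: with `n = k²`
agents and `n + 1` goods as described, `OPT_U ≥ k + 1/(n+1)`, while every connected
PROP1 allocation has utilitarian welfare at most `2 - (k-1)/(k(n+1))`. -/
-- auxiliary lemmas

lemma aux_card_filter_Ico (m a b : ℕ) (hb : b ≤ m) :
    (univ.filter fun j : Fin m => a ≤ (j:ℕ) ∧ (j:ℕ) < b).card = b - a := by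
  rw [← Nat.card_Ico a b]
  apply Finset.card_bij (fun (j : Fin m) _ => (j:ℕ))
  · intro x hx
    simp only [mem_filter] at hx
    exact Finset.mem_Ico.2 hx.2
  · intro x _ y _ h; exact Fin.ext h
  · intro c hc
    rw [Finset.mem_Ico] at hc
    exact ⟨⟨c, lt_of_lt_of_le hc.2 hb⟩, by simp [hc.1, hc.2], rfl⟩

lemma aux_card_filter_lt (m b : ℕ) (hb : b ≤ m) :
    (univ.filter fun j : Fin m => (j:ℕ) < b).card = b := by
  have h : (univ.filter fun j : Fin m => (j:ℕ) < b)
      = (univ.filter fun j : Fin m => 0 ≤ (j:ℕ) ∧ (j:ℕ) < b) := by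
    apply Finset.filter_congr
    intro x _
    simp
  rw [h, aux_card_filter_Ico m 0 b hb]
  omega

lemma aux_bundleVal_const {m : ℕ} (v : Fin m → ℝ) (S : Finset (Fin m)) (c : ℝ)
    (h : ∀ e ∈ S, v e = c) : bundleVal v S = S.card * c := by
  rw [bundleVal, Finset.sum_congr rfl h, Finset.sum_const, nsmul_eq_mul]

lemma aux_bundleVal_le {m : ℕ} (v : Fin m → ℝ) (S : Finset (Fin m)) (c : ℝ)
    (h : ∀ e ∈ S, v e ≤ c) : bundleVal v S ≤ S.card * c := by
  calc bundleVal v S ≤ ∑ _e ∈ S, c := Finset.sum_le_sum h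
  _ = S.card * c := by rw [Finset.sum_const, nsmul_eq_mul]

theorem goods_utilitarian_prop1_lower_bound (k : ℕ) (hk : 2 ≤ k) (n : ℕ) (hn : n = k ^ 2)
    (v : Fin n → Fin (n + 1) → ℝ)
    (hv1 : ∀ i : Fin n, (i : ℕ) < k → ∀ j : Fin (n + 1),
      v i j = if (i : ℕ) * k ≤ (j : ℕ) ∧ (j : ℕ) < ((i : ℕ) + 1) * k
              then 1 / (k : ℝ) else 0)
    (hv2 : ∀ i : Fin n, k ≤ (i : ℕ) → ∀ j : Fin (n + 1), v i j = 1 / ((n : ℝ) + 1)) :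
    (k : ℝ) + 1 / ((n : ℝ) + 1) ≤ optU n (n + 1) v ∧
    ∀ A : Fin n → Finset (Fin (n + 1)), ConnAlloc n (n + 1) A →
      Prop1Goods n (n + 1) v A →
      utilW n (n + 1) v A ≤ 2 - ((k : ℝ) - 1) / ((k : ℝ) * ((n : ℝ) + 1)) := by
  classical
  have hkk : k * k = n := by rw [hn, sq]
  have hkn : k < n := by nlinarith
  have hn4 : 4 ≤ n := by nlinarith
  have hk0 : (0:ℝ) < (k:ℝ) := by positivity
  have hn1 : (0:ℝ) < (n:ℝ) + 1 := by positivity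
  -- nonneg and bounded valuations
  have hv_nonneg : ∀ i j, 0 ≤ v i j := by
    intro i j
    rcases lt_or_ge (i:ℕ) k with h | h
    · rw [hv1 i h j]; split_ifs <;> positivity
    · rw [hv2 i h j]; positivity
  have hv_le_one : ∀ i j, v i j ≤ 1 := by
    intro i j
    rcases lt_or_ge (i:ℕ) k with h | h
    · rw [hv1 i h j]; split_ifs
      · rw [div_le_one hk0]; exact_mod_cast by omega
      · norm_num
    · rw [hv2 i h j]; rw [div_le_one hn1]; linarith
  -- the set defining optU is bounded above
  have hbdd : BddAbove { x : ℝ | ∃ A, ConnAlloc n (n+1) A ∧ x = utilW n (n+1) v A } := by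
    refine ⟨(n:ℝ) * ((n:ℝ)+1), ?_⟩
    rintro x ⟨A, _, rfl⟩
    have h1 : ∀ i, bundleVal (v i) (A i) ≤ (n:ℝ) + 1 := by
      intro i
      calc bundleVal (v i) (A i) ≤ ((A i).card : ℝ) * 1 := aux_bundleVal_le _ _ _ (fun e _ => hv_le_one i e)
      _ ≤ (n:ℝ) + 1 := by
          rw [mul_one]
          exact_mod_cast (Finset.card_le_card (Finset.subset_univ _)).trans (by simp)
    calc utilW n (n+1) v A ≤ ∑ _i : Fin n, ((n:ℝ)+1) := Finset.sum_le_sum (fun i _ => h1 i)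
    _ = (n:ℝ) * ((n:ℝ)+1) := by rw [Finset.sum_const, nsmul_eq_mul]; simp
  constructor
  · -- PART 1
    set B : Fin n → Finset (Fin (n+1)) := fun i =>
      if (i:ℕ) < k then univ.filter (fun j : Fin (n+1) => (i:ℕ)*k ≤ (j:ℕ) ∧ (j:ℕ) < ((i:ℕ)+1)*k)
      else if (i:ℕ) = k then {(⟨n, by omega⟩ : Fin (n+1))} else ∅ with hB
    have hmemB : ∀ (i : Fin n) (e : Fin (n+1)), e ∈ B i ↔
        ((i:ℕ) < k ∧ (i:ℕ)*k ≤ (e:ℕ) ∧ (e:ℕ) < ((i:ℕ)+1)*k) ∨ ((i:ℕ) = k ∧ (e:ℕ) = n) := by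
      intro i e
      rw [hB]
      dsimp only
      split_ifs with h1 h2
      · simp only [mem_filter, mem_univ, true_and]
        constructor
        · intro h; exact Or.inl ⟨h1, h⟩
        · rintro (⟨_, h⟩ | ⟨h2, _⟩)
          · exact h
          · omega
      · simp only [mem_singleton, Fin.ext_iff]
        constructor
        · intro h; exact Or.inr ⟨h2, h⟩
        · rintro (⟨h, _⟩ | ⟨_, h⟩)
          · omega
          · exact h
      · simp only [notMem_empty, false_iff]
        rintro (⟨h, _⟩ | ⟨h, _⟩) <;> omega
    have hconn : ConnAlloc n (n+1) B := by
      refine ⟨?_, ?_, ?_⟩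
      · intro i
        rw [hB]
        dsimp only
        split_ifs with h1 h2
        · intro a ha c hc b hab hbc
          simp only [mem_filter, mem_univ, true_and] at *
          rw [Fin.le_def] at hab hbc
          exact ⟨le_trans ha.1 hab, lt_of_le_of_lt hbc hc.2⟩
        · intro a ha c hc b hab hbc
          simp only [mem_singleton] at *
          subst ha; subst hc
          exact le_antisymm hbc hab
        · intro a ha; simp at ha
      · intro i j hij
        rw [Finset.disjoint_left]
        intro e hei hej
        rw [hmemB] at hei hej
        have hne : (i:ℕ) ≠ (j:ℕ) := fun h => hij (Fin.ext h)
        rcases hei with ⟨hi, hi1, hi2⟩ | ⟨hi, hie⟩ <;> rcases hej with ⟨hj, hj1, hj2⟩ | ⟨hj, hje⟩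
        · rcases Nat.lt_or_ge (i:ℕ) (j:ℕ) with h | h
          · have : ((i:ℕ)+1) * k ≤ (j:ℕ) * k := Nat.mul_le_mul_right k h
            omega
          · have h' : (j:ℕ) < (i:ℕ) := by omega
            have : ((j:ℕ)+1) * k ≤ (i:ℕ) * k := Nat.mul_le_mul_right k h'
            omega
        · have : ((i:ℕ)+1) * k ≤ k * k := Nat.mul_le_mul_right k (by omega)
          omega
        · have : ((j:ℕ)+1) * k ≤ k * k := Nat.mul_le_mul_right k (by omega)
          omega
        · omega
      · intro e
        rcases Nat.lt_or_ge (e:ℕ) n with h | h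
        · refine ⟨⟨(e:ℕ)/k, ?_⟩, ?_⟩
          · have := Nat.div_le_self (e:ℕ) k; omega
          · rw [hmemB]
            have hd : k * ((e:ℕ)/k) + (e:ℕ) % k = (e:ℕ) := Nat.div_add_mod _ _
            have hm : (e:ℕ) % k < k := Nat.mod_lt _ (by omega)
            have hdk : (e:ℕ)/k < k := by
              by_contra hc
              push_neg at hc
              have : k * k ≤ k * ((e:ℕ)/k) := Nat.mul_le_mul_left k hc
              omega
            left
            have h2 : ((e:ℕ)/k + 1) * k = k * ((e:ℕ)/k) + k := by ring
            refine ⟨hdk, Nat.div_mul_le_self _ _, ?_⟩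
            simp only [Fin.val_mk]
            omega
        · refine ⟨⟨k, hkn⟩, ?_⟩
          rw [hmemB]
          right
          have := e.isLt
          exact ⟨rfl, by omega⟩
    -- welfare of B
    have hval : ∀ i : Fin n, bundleVal (v i) (B i) =
        if (i:ℕ) < k then 1 else if (i:ℕ) = k then 1/((n:ℝ)+1) else 0 := by
      intro i
      rw [hB]
      dsimp only
      split_ifs with h1 h2
      · rw [aux_bundleVal_const (v i) _ (1/(k:ℝ)) ?_]
        · have hle : ((i:ℕ)+1)*k ≤ n+1 := by
            have := Nat.mul_le_mul_right k (show (i:ℕ)+1 ≤ k by omega)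
            omega
          rw [aux_card_filter_Ico (n+1) _ _ hle]
          have harith : ((i:ℕ)+1)*k - (i:ℕ)*k = k := by
            rw [Nat.add_mul, one_mul]; omega
          rw [harith]
          field_simp
        · intro e he
          simp only [mem_filter, mem_univ, true_and] at he
          rw [hv1 i h1 e, if_pos he]
      · rw [aux_bundleVal_const (v i) _ (1/((n:ℝ)+1)) ?_]
        · simp
        · intro e _
          exact hv2 i (by omega) e
      · rw [bundleVal, Finset.sum_empty]
    have hW : utilW n (n+1) v B = (k:ℝ) + 1/((n:ℝ)+1) := by
      rw [utilW]
      have : ∀ i : Fin n, bundleVal (v i) (B i) =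
          (if (i:ℕ) < k then (1:ℝ) else 0) + (if i = (⟨k, hkn⟩ : Fin n) then 1/((n:ℝ)+1) else 0) := by
        intro i
        rw [hval i]
        by_cases h1 : (i:ℕ) < k
        · rw [if_pos h1, if_pos h1, if_neg (by intro h; subst h; simp at h1), add_zero]
        · rw [if_neg h1, if_neg h1]
          by_cases h2 : (i:ℕ) = k
          · rw [if_pos h2, if_pos (Fin.ext h2), zero_add]
          · rw [if_neg h2, if_neg (fun h => h2 (by rw [h])), add_zero]
      rw [Finset.sum_congr rfl (fun i _ => this i), Finset.sum_add_distrib]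
      congr 1
      · rw [Finset.sum_boole]
        have := aux_card_filter_lt n k (le_of_lt hkn)
        rw [this]
      · rw [Finset.sum_ite_eq' Finset.univ (⟨k, hkn⟩ : Fin n) (fun _ => 1/((n:ℝ)+1))]
        simp
    apply le_csSup hbdd
    exact ⟨B, hconn, hW.symm⟩
  · -- PART 2
    intro A hA hP
    obtain ⟨hAconn, hAdisj, hAcov⟩ := hA
    -- uniform agents get at least one item
    have hNE : ∀ i : Fin n, k ≤ (i:ℕ) → (A i).Nonempty := by
      intro i hki
      rw [Finset.nonempty_iff_ne_empty]
      intro hempty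
      rcases hP i with h | ⟨e, he, _, h⟩
      · rw [hempty, bundleVal, Finset.sum_empty] at h
        have : (0:ℝ) < 1/(n:ℝ) := by positivity
        linarith
      · rw [hempty, insert_empty_eq, bundleVal, Finset.sum_singleton, hv2 i hki e] at h
        have h1 : (1:ℝ)/((n:ℝ)+1) < 1/(n:ℝ) := by
          apply one_div_lt_one_div_of_lt
          · positivity
          · linarith
        linarith
    -- total cards
    have hcards : ∑ i : Fin n, (A i).card = n + 1 := by
      have hbu : Finset.univ.biUnion A = (Finset.univ : Finset (Fin (n+1))) := by
        apply Finset.eq_univ_of_forall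
        intro e
        rcases hAcov e with ⟨i, hi⟩
        exact Finset.mem_biUnion.2 ⟨i, Finset.mem_univ i, hi⟩
      have := Finset.card_biUnion (s := Finset.univ) (t := A) (fun i _ j _ hij => hAdisj i j hij)
      rw [hbu] at this
      simp only [Finset.card_univ, Fintype.card_fin] at this
      omega
    set T := (univ.filter fun i : Fin n => (i:ℕ) < k) with hT
    set t := ∑ i ∈ T, (A i).card with ht
    set s := ∑ i ∈ Tᶜ, (A i).card with hs
    have hts : t + s = n + 1 := by
      rw [ht, hs]
      exact (Finset.sum_add_sum_compl T fun i => (A i).card).trans hcards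
    have hcardT : T.card = k := by
      rw [hT]
      have : (univ.filter fun i : Fin n => (i:ℕ) < k) =
          (univ.filter fun i : Fin n => 0 ≤ (i:ℕ) ∧ (i:ℕ) < k) := by
        apply Finset.filter_congr
        intro x _
        simp
      rw [this, aux_card_filter_Ico n 0 k (by omega)]
      omega
    have hcardTc : Tᶜ.card = n - k := by
      have := Finset.card_compl T
      simp only [Fintype.card_fin] at this
      omega
    have hsge : n - k ≤ s := by
      rw [hs]
      calc n - k = ∑ _i ∈ Tᶜ, 1 := by rw [Finset.sum_const, smul_eq_mul, mul_one, hcardTc]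
      _ ≤ ∑ i ∈ Tᶜ, (A i).card := by
          apply Finset.sum_le_sum
          intro i hi
          have hki : k ≤ (i:ℕ) := by
            rw [hT] at hi
            simp only [Finset.mem_compl, Finset.mem_filter, Finset.mem_univ, true_and, not_lt] at hi
            exact hi
          exact Finset.card_pos.2 (hNE i hki)
    have htle : t ≤ k + 1 := by omega
    -- welfare bound
    have hW1 : ∑ i ∈ T, bundleVal (v i) (A i) ≤ (t:ℝ) / k := by
      calc ∑ i ∈ T, bundleVal (v i) (A i) ≤ ∑ i ∈ T, ((A i).card : ℝ) * (1/(k:ℝ)) := by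
            apply Finset.sum_le_sum
            intro i hi
            have hik : (i:ℕ) < k := by
              rw [hT] at hi
              simp only [Finset.mem_filter, Finset.mem_univ, true_and] at hi
              exact hi
            apply aux_bundleVal_le
            intro e _
            rw [hv1 i hik e]
            split_ifs
            · exact le_rfl
            · positivity
      _ = (t:ℝ) / k := by
            rw [← Finset.sum_mul, ht]
            push_cast
            rw [mul_one_div]
    have hW2 : ∑ i ∈ Tᶜ, bundleVal (v i) (A i) = (s:ℝ) / ((n:ℝ)+1) := by
      calc ∑ i ∈ Tᶜ, bundleVal (v i) (A i) = ∑ i ∈ Tᶜ, ((A i).card : ℝ) * (1/((n:ℝ)+1)) := by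
            apply Finset.sum_congr rfl
            intro i hi
            have hki : k ≤ (i:ℕ) := by
              rw [hT] at hi
              simp only [Finset.mem_compl, Finset.mem_filter, Finset.mem_univ, true_and, not_lt] at hi
              exact hi
            exact aux_bundleVal_const _ _ _ (fun e _ => hv2 i hki e)
      _ = (s:ℝ) / ((n:ℝ)+1) := by
            rw [← Finset.sum_mul, hs]
            push_cast
            rw [mul_one_div]
    have hsplit : utilW n (n+1) v A = ∑ i ∈ T, bundleVal (v i) (A i) + ∑ i ∈ Tᶜ, bundleVal (v i) (A i) := by
      rw [utilW, ← Finset.sum_add_sum_compl T]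
    have hsr : (s:ℝ) = (n:ℝ) + 1 - t := by
      have : (t:ℝ) + s = (n:ℝ) + 1 := by exact_mod_cast hts
      linarith
    have htr : (t:ℝ) ≤ (k:ℝ) + 1 := by exact_mod_cast htle
    have hnr : (n:ℝ) = (k:ℝ)^2 := by exact_mod_cast hn
    rw [hsplit]
    have key : (t:ℝ)/k + (s:ℝ)/((n:ℝ)+1) ≤ 2 - ((k:ℝ) - 1) / ((k:ℝ) * ((n:ℝ) + 1)) := by
      have h2 : (2:ℝ) - ((k:ℝ)-1)/((k:ℝ)*((n:ℝ)+1))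
          = (2*((k:ℝ)*((n:ℝ)+1)) - ((k:ℝ)-1))/((k:ℝ)*((n:ℝ)+1)) := by
        field_simp
      have h3 : (t:ℝ)/k + ((n:ℝ)+1-(t:ℝ))/((n:ℝ)+1)
          = ((t:ℝ)*((n:ℝ)+1) + ((n:ℝ)+1-(t:ℝ))*k)/((k:ℝ)*((n:ℝ)+1)) := by
        field_simp
        try ring
      rw [hsr, h3, h2, div_le_div_iff_of_pos_right (show (0:ℝ) < (k:ℝ)*((n:ℝ)+1) by positivity)]
      rw [hnr]
      nlinarith [mul_nonneg (by linarith : (0:ℝ) ≤ (k:ℝ)+1-(t:ℝ))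
        (by nlinarith : (0:ℝ) ≤ (k:ℝ)^2+1-(k:ℝ)), hk0, htr]
    linarith [hW1, hW2, key]
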